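/- Let φ be the Fibonacci morphism, f_k = φ^{k-1}(0), and for n ≥ 2 let p_n be f_n with its last two letters removed. Then for all n ≥ 0: 0 · φ²(0) · φ¹(0) · φ²(0) · φ³(0) ··· φ^{2n}(0) · φ^{2n+3}(0) = 0 · f_{2n+3} · f_{2n+4}, and this word equals 0·p_{2n+5}·0·1. -/
import Mathlib


/-- The Fibonacci morphism on letters: φ(0)=01, φ(1)=0 (0 = `false`, 1 = `true`). -/
def phi : Bool → List Bool
  | false => [false, true]
  | true  => [false]

/-- The Fibonacci morphism extended to words. -/
def phiW (w : List Bool) : List Bool := w.flatMap phi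

/-- The finite Fibonacci words: `fibw n = φ^{n-1}(0)` for `n ≥ 1`. -/
def fibw (n : ℕ) : List Bool := phiW^[n - 1] [false]

/-- The bispecial factors of the Fibonacci word: `fibw n` with its
last two letters removed. -/
def pbis (n : ℕ) : List Bool := (fibw n).dropLast.dropLast

lemma phiW_append (a b : List Bool) : phiW (a ++ b) = phiW a ++ phiW b := by
  simp [phiW]

lemma phiW_iter_append (k : ℕ) : ∀ a b : List Bool,
    phiW^[k] (a ++ b) = phiW^[k] a ++ phiW^[k] b := by
  induction k with
  | zero => simp
  | succ k ih =>
      intro a b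
      rw [Function.iterate_succ_apply, Function.iterate_succ_apply,
        Function.iterate_succ_apply, phiW_append, ih]

lemma phiW_rec (k : ℕ) :
    phiW^[k + 2] [false] = phiW^[k + 1] [false] ++ phiW^[k] [false] := by
  have h2 : phiW^[k + 2] [false] = phiW^[k] (phiW^[2] [false]) :=
    Function.iterate_add_apply phiW k 2 [false]
  have h1 : phiW^[k + 1] [false] = phiW^[k] (phiW^[1] [false]) :=
    Function.iterate_add_apply phiW k 1 [false]
  have e2 : phiW^[2] [false] = [false, true] ++ [false] := by decide
  have e1 : phiW^[1] [false] = [false, true] := by decide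
  rw [h2, h1, e2, e1, phiW_iter_append]

/-- the letters pair depending on parity -/
def cpair (k : ℕ) : List Bool := if k % 2 = 0 then [false, true] else [true, false]

lemma swap_lemma (k : ℕ) :
    ∃ w : List Bool,
      phiW^[k] [false] ++ phiW^[k + 1] [false] = w ++ cpair k ∧
      phiW^[k + 1] [false] ++ phiW^[k] [false] = w ++ cpair (k + 1) := by
  induction k with
  | zero =>
      exact ⟨[false], by decide, by decide⟩
  | succ k ih =>
      obtain ⟨w, h1, h2⟩ := ih
      refine ⟨phiW^[k + 1] [false] ++ w, ?_, ?_⟩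
      · rw [phiW_rec k, h2, List.append_assoc]
      · rw [phiW_rec k, List.append_assoc, h1, ← List.append_assoc]
        have : cpair (k + 2) = cpair k := by
          simp [cpair, Nat.add_mod]
        rw [this]

lemma drop2 (w : List Bool) (a b : Bool) :
    (w ++ [a, b]).dropLast.dropLast = w := by
  have : w ++ [a, b] = (w ++ [a]) ++ [b] := by simp
  rw [this, List.dropLast_concat, List.dropLast_concat]

theorem fib_expansion_identity (n : ℕ) :
    [false] ++ phiW^[2] [false] ++
        ((List.range (2 * n)).map (fun j => phiW^[j + 1] [false])).flatten ++
        phiW^[2 * n + 3] [false]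
      = [false] ++ fibw (2 * n + 3) ++ fibw (2 * n + 4) ∧
    [false] ++ fibw (2 * n + 3) ++ fibw (2 * n + 4)
      = [false] ++ pbis (2 * n + 5) ++ [false, true] := by
  have key : ∀ m : ℕ, phiW^[2] [false] ++
      ((List.range (2 * m)).map (fun j => phiW^[j + 1] [false])).flatten
      = phiW^[2 * m + 2] [false] := by
    intro m
    induction m with
    | zero => simp
    | succ m ih =>
        have hr : 2 * (m + 1) = (2 * m + 1) + 1 := by ring
        rw [hr, List.range_succ, List.range_succ]
        simp only [List.map_append, List.flatten_append, List.map_cons,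
          List.map_nil, List.flatten_cons, List.flatten_nil, List.append_nil,
          ← List.append_assoc, ih]
        show phiW^[2 * m + 2] [false] ++ phiW^[2 * m + 1] [false] ++
            phiW^[2 * m + 2] [false] = phiW^[2 * m + 4] [false]
        have e1 : phiW^[2 * m + 4] [false]
            = phiW^[2 * m + 3] [false] ++ phiW^[2 * m + 2] [false] :=
          phiW_rec (2 * m + 2)
        have e2 : phiW^[2 * m + 3] [false]
            = phiW^[2 * m + 2] [false] ++ phiW^[2 * m + 1] [false] :=
          phiW_rec (2 * m + 1)
        rw [e1, e2]
  constructor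
  · show [false] ++ phiW^[2] [false] ++ _ ++ phiW^[2 * n + 3] [false]
      = [false] ++ phiW^[2 * n + 2] [false] ++ phiW^[2 * n + 3] [false]
    rw [List.append_assoc [false], key n]
  · obtain ⟨w, h1, h2⟩ := swap_lemma (2 * n + 2)
    have hc1 : cpair (2 * n + 2) = [false, true] := by simp [cpair, Nat.add_mod]
    have hc2 : cpair (2 * n + 3) = [true, false] := by
      simp [cpair, Nat.add_mod, Nat.mul_mod]
    have h1' : phiW^[2 * n + 2] [false] ++ phiW^[2 * n + 3] [false]
        = w ++ [false, true] := by rw [← hc1]; exact h1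
    have h2' : phiW^[2 * n + 3] [false] ++ phiW^[2 * n + 2] [false]
        = w ++ [true, false] := by rw [← hc2]; exact h2
    show [false] ++ phiW^[2 * n + 2] [false] ++ phiW^[2 * n + 3] [false]
      = [false] ++ (phiW^[2 * n + 4] [false]).dropLast.dropLast ++ [false, true]
    have e5 : phiW^[2 * n + 4] [false] = w ++ [true, false] := by
      have := phiW_rec (2 * n + 2)
      rw [show phiW^[2 * n + 4] [false]
          = phiW^[2 * n + 3] [false] ++ phiW^[2 * n + 2] [false] from this, h2']
    rw [e5, drop2, List.append_assoc, h1']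
    simp [List.append_assoc]
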